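/- (Symmetry of the N-fold transformed solution; Theorem 5.4.) Let λ₁,…,λ_N ∈ ℂ satisfy λⱼ* ≠ λᵢ and λⱼ* ≠ −λᵢ for all i,j. Let φᵢ = (φᵢ⁽¹⁾, φᵢ⁽²⁾)ᵀ : ℝ² → ℂ² be differentiable and satisfy the involution φᵢ⁽¹⁾(−ξ,−t) = −i·φᵢ⁽²⁾(ξ,t) and φᵢ⁽²⁾(−ξ,−t) = i·φᵢ⁽¹⁾(ξ,t) for all (ξ,t), and let ũ : ℝ² → ℂ be differentiable with ũ(ξ,t) = −ũ(−ξ,−t)*. Assume M(ξ,t) is invertible for every (ξ,t). Then u_N := ∂_ξ( ũ + i·φ⁽²⁾†M⁻¹φ⁽¹⁾ ) satisfies u_N(ξ,t) = u_N(−ξ,−t)* for all (ξ,t). -/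

import Mathlib

open Matrix Complex

/-- Partial derivative in the first (space) variable. -/
noncomputable def dx (f : ℝ × ℝ → ℂ) (p : ℝ × ℝ) : ℂ :=
  deriv (fun x => f (x, p.2)) p.1

/-- Partial derivative in the second (time) variable. -/
noncomputable def dt (f : ℝ × ℝ → ℂ) (p : ℝ × ℝ) : ℂ :=
  deriv (fun t => f (p.1, t)) p.2

/-- The derivative nonlinear Schrödinger equation `i uₜ + uₓₓ + 2 i (|u|² u)ₓ = 0`. -/
def IsDNLSSolution (u : ℝ × ℝ → ℂ) : Prop :=
  ∀ p : ℝ × ℝ,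
    Complex.I * dt u p + dx (fun q => dx u q) p +
      2 * Complex.I * dx (fun q => (Complex.normSq (u q) : ℂ) * u q) p = 0

/-- The Pauli matrix `σ₃ = diag(1, -1)`. -/
noncomputable def sigma3 : Matrix (Fin 2) (Fin 2) ℂ := !![1, 0; 0, -1]

/-- The potential matrix `Q = [[0, i u], [i u*, 0]]`. -/
noncomputable def Qmat (u : ℝ × ℝ → ℂ) (p : ℝ × ℝ) : Matrix (Fin 2) (Fin 2) ℂ :=
  !![0, Complex.I * u p; Complex.I * (starRingEnd ℂ) (u p), 0]

/-- The Lax-pair matrix `U(Q;λ) = -2 i λ² σ₃ + 2 λ Q`. -/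
noncomputable def Umat (u : ℝ × ℝ → ℂ) (l : ℂ) (p : ℝ × ℝ) : Matrix (Fin 2) (Fin 2) ℂ :=
  (-2 * Complex.I * l ^ 2) • sigma3 + (2 * l) • Qmat u p

/-- The Lax-pair matrix `V(Q;λ) = (4 λ² + 2 Q²) U(Q;λ) + 2 i λ σ₃ Qₓ`. -/
noncomputable def Vmat (u : ℝ × ℝ → ℂ) (l : ℂ) (p : ℝ × ℝ) : Matrix (Fin 2) (Fin 2) ℂ :=
  ((4 * l ^ 2) • (1 : Matrix (Fin 2) (Fin 2) ℂ) + (2 : ℂ) • (Qmat u p * Qmat u p)) * Umat u l p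
    + (2 * Complex.I * l) • (sigma3 * Matrix.of fun i j => dx (fun q => Qmat u q i j) p)

/-- Componentwise spatial derivative of a vector-valued function. -/
noncomputable def dxv {n : ℕ} (f : ℝ × ℝ → Fin n → ℂ) (p : ℝ × ℝ) : Fin n → ℂ :=
  fun i => dx (fun q => f q i) p

/-- Componentwise temporal derivative of a vector-valued function. -/
noncomputable def dtv {n : ℕ} (f : ℝ × ℝ → Fin n → ℂ) (p : ℝ × ℝ) : Fin n → ℂ :=
  fun i => dt (fun q => f q i) p

/-- `φ` solves the Lax pair `φₓ = U(Q;λ)φ`, `φₜ = V(Q;λ)φ` at spectral parameter `λ`. -/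
def IsLaxSolution (u : ℝ × ℝ → ℂ) (l : ℂ) (φ : ℝ × ℝ → Fin 2 → ℂ) : Prop :=
  ∀ p : ℝ × ℝ, dxv φ p = Umat u l p *ᵥ φ p ∧ dtv φ p = Vmat u l p *ᵥ φ p

/-- The matrix `M` with entries
`M_{ij} = (φⱼ†φᵢ/(λⱼ* − λᵢ) − φⱼ†σ₃φᵢ/(λⱼ* + λᵢ)) λᵢ λⱼ*`. -/
noncomputable def Mmat {N : ℕ} (l : Fin N → ℂ) (φ : Fin N → ℝ × ℝ → Fin 2 → ℂ)
    (p : ℝ × ℝ) : Matrix (Fin N) (Fin N) ℂ :=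
  Matrix.of fun i j =>
    ((star (φ j p) ⬝ᵥ φ i p) / (starRingEnd ℂ (l j) - l i)
      - (star (φ j p) ⬝ᵥ (sigma3 *ᵥ φ i p)) / (starRingEnd ℂ (l j) + l i))
      * (l i * starRingEnd ℂ (l j))

/-- The vector `φ⁽ᵏ⁾ = (φ₁⁽ᵏ⁾, …, φ_N⁽ᵏ⁾)ᵀ` (with `k = 0` the first components,
`k = 1` the second components). -/
noncomputable def phiVec {N : ℕ} (φ : Fin N → ℝ × ℝ → Fin 2 → ℂ) (k : Fin 2)
    (p : ℝ × ℝ) : Fin N → ℂ :=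
  fun i => φ i p k
section Aux

private lemma deriv_conj_aux (f : ℝ → ℂ) (x : ℝ) :
    deriv (fun y => starRingEnd ℂ (f y)) x = starRingEnd ℂ (deriv f x) := by
  rw [← fderiv_apply_one_eq_deriv, ← fderiv_apply_one_eq_deriv]
  have h : (fun y => starRingEnd ℂ (f y)) = (RCLike.conjCLE : ℂ ≃L[ℝ] ℂ) ∘ f := by
    funext y; simp [RCLike.conjCLE_apply]
  rw [h, ContinuousLinearEquiv.comp_fderiv]
  simp [RCLike.conjCLE_apply]

private lemma inv_neg_aux {N : ℕ} (A : Matrix (Fin N) (Fin N) ℂ) (hA : IsUnit A) :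
    (-A)⁻¹ = -A⁻¹ := by
  apply Matrix.inv_eq_right_inv
  rw [Matrix.neg_mul, Matrix.mul_neg, neg_neg,
    Matrix.mul_nonsing_inv _ ((Matrix.isUnit_iff_isUnit_det A).mp hA)]

private lemma conj_dot_aux {n : ℕ} (B : Matrix (Fin n) (Fin n) ℂ) (v w : Fin n → ℂ) :
    starRingEnd ℂ (star v ⬝ᵥ (B *ᵥ w)) = star w ⬝ᵥ (Bᴴ *ᵥ v) := by
  have h1 : star v ⬝ᵥ (B *ᵥ w) = star (star (B *ᵥ w) ⬝ᵥ v) := Matrix.star_dotProduct _ _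
  rw [show (starRingEnd ℂ (star v ⬝ᵥ (B *ᵥ w))) = star (star v ⬝ᵥ (B *ᵥ w)) from rfl,
    h1, star_star, Matrix.star_mulVec, ← Matrix.dotProduct_mulVec]

end Aux

/-- Symmetry of the N-fold transformed solution: if the eigenfunctions satisfy the
involution and `ũ(ξ,t) = −ũ(−ξ,−t)*`, then
`u_N = ∂_ξ(ũ + i φ⁽²⁾†M⁻¹φ⁽¹⁾)` satisfies `u_N(ξ,t) = u_N(−ξ,−t)*`. -/
theorem uN_symmetry {N : ℕ} (l : Fin N → ℂ)
    (hl : ∀ i j, starRingEnd ℂ (l j) ≠ l i ∧ starRingEnd ℂ (l j) ≠ -(l i))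
    (φ : Fin N → ℝ × ℝ → Fin 2 → ℂ)
    (hφ_diff : ∀ i, Differentiable ℝ (φ i))
    (hinv : ∀ i, ∀ ξ t : ℝ,
      φ i (-ξ, -t) 0 = -Complex.I * φ i (ξ, t) 1 ∧
      φ i (-ξ, -t) 1 = Complex.I * φ i (ξ, t) 0)
    (utilde : ℝ × ℝ → ℂ) (hu_diff : Differentiable ℝ utilde)
    (hu_sym : ∀ ξ t : ℝ, utilde (ξ, t) = -starRingEnd ℂ (utilde (-ξ, -t)))
    (hM : ∀ p : ℝ × ℝ, IsUnit (Mmat l φ p)) :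
    ∀ ξ t : ℝ,
      dx (fun q => utilde q
          + Complex.I * (star (phiVec φ 1 q) ⬝ᵥ ((Mmat l φ q)⁻¹ *ᵥ phiVec φ 0 q))) (ξ, t)
        = starRingEnd ℂ
            (dx (fun q => utilde q
              + Complex.I * (star (phiVec φ 1 q) ⬝ᵥ ((Mmat l φ q)⁻¹ *ᵥ phiVec φ 0 q)))
              (-ξ, -t)) := by
  intro ξ t
  set F : ℝ × ℝ → ℂ := fun q => utilde q
      + Complex.I * (star (phiVec φ 1 q) ⬝ᵥ ((Mmat l φ q)⁻¹ *ᵥ phiVec φ 0 q)) with hF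
  have hs3 : ∀ v : Fin 2 → ℂ, sigma3 *ᵥ v = ![v 0, -(v 1)] := by
    intro v
    funext k
    fin_cases k <;>
      simp [sigma3, Matrix.mulVec, dotProduct, Fin.sum_univ_two]
  have key : ∀ a b : ℝ, F (a, b) = -starRingEnd ℂ (F (-a, -b)) := by
    intro a b
    set A := Mmat l φ (a, b) with hA
    have h0 : phiVec φ 0 (-a, -b) = (-Complex.I) • phiVec φ 1 (a, b) := by
      funext i
      simp [phiVec, (hinv i a b).1]
    have h1 : phiVec φ 1 (-a, -b) = Complex.I • phiVec φ 0 (a, b) := by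
      funext i
      simp [phiVec, (hinv i a b).2]
    have hMq : Mmat l φ (-a, -b) = -Aᴴ := by
      ext i j
      have e0i := (hinv i a b).1
      have e1i := (hinv i a b).2
      have e0j := (hinv j a b).1
      have e1j := (hinv j a b).2
      have d1 : star (φ j (-a, -b)) ⬝ᵥ φ i (-a, -b)
          = star (φ j (a, b)) ⬝ᵥ φ i (a, b) := by
        simp only [dotProduct, Fin.sum_univ_two, Pi.star_apply, e0i, e1i, e0j, e1j,
          RCLike.star_def, _root_.map_mul, map_neg, Complex.conj_I]
        linear_combination (-(starRingEnd ℂ (φ j (a,b) 0) * φ i (a,b) 0)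
          - starRingEnd ℂ (φ j (a,b) 1) * φ i (a,b) 1) * Complex.I_mul_I
      have d2 : star (φ j (-a, -b)) ⬝ᵥ (sigma3 *ᵥ φ i (-a, -b))
          = -(star (φ j (a, b)) ⬝ᵥ (sigma3 *ᵥ φ i (a, b))) := by
        rw [hs3, hs3]
        simp only [dotProduct, Fin.sum_univ_two, Pi.star_apply,
          Matrix.cons_val_zero, Matrix.cons_val_one, Matrix.head_cons,
          e0i, e1i, e0j, e1j, RCLike.star_def, _root_.map_mul, map_neg, Complex.conj_I]
        linear_combination (starRingEnd ℂ (φ j (a,b) 0) * φ i (a,b) 0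
          - starRingEnd ℂ (φ j (a,b) 1) * φ i (a,b) 1) * Complex.I_mul_I
      have d3 : starRingEnd ℂ (star (φ i (a, b)) ⬝ᵥ φ j (a, b))
          = star (φ j (a, b)) ⬝ᵥ φ i (a, b) := by
        simp [dotProduct, Fin.sum_univ_two, mul_comm]
      have d4 : starRingEnd ℂ (star (φ i (a, b)) ⬝ᵥ (sigma3 *ᵥ φ j (a, b)))
          = star (φ j (a, b)) ⬝ᵥ (sigma3 *ᵥ φ i (a, b)) := by
        rw [hs3, hs3]
        simp [dotProduct, Fin.sum_univ_two]
        ring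
      simp only [hA, Mmat, Matrix.of_apply, Matrix.neg_apply, Matrix.conjTranspose_apply,
        d1, d2, neg_div, sub_neg_eq_add]
      rw [show starRingEnd ℂ (l j) - l i = -(l i - starRingEnd ℂ (l j)) by ring, div_neg]
      simp only [RCLike.star_def, map_sub, map_div₀, _root_.map_mul, map_add, map_inv₀,
        Complex.conj_conj, d3, d4]
      ring
    have hMinv : (Mmat l φ (-a, -b))⁻¹ = -(A⁻¹)ᴴ := by
      rw [hMq, inv_neg_aux _ ((Matrix.isUnit_conjTranspose A).mpr (hM (a, b))),
        ← Matrix.conjTranspose_nonsing_inv]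
    have hS : star (phiVec φ 1 (-a, -b)) ⬝ᵥ ((Mmat l φ (-a, -b))⁻¹ *ᵥ phiVec φ 0 (-a, -b))
        = starRingEnd ℂ (star (phiVec φ 1 (a, b)) ⬝ᵥ (A⁻¹ *ᵥ phiVec φ 0 (a, b))) := by
      rw [conj_dot_aux, h0, h1, hMinv, star_smul, Matrix.mulVec_smul, Matrix.neg_mulVec,
        smul_dotProduct]
      simp only [dotProduct_smul, dotProduct_neg, smul_eq_mul,
        Complex.star_def, Complex.conj_I]
      linear_combination (-(star (phiVec φ 0 (a, b)) ⬝ᵥ (A⁻¹ᴴ *ᵥ phiVec φ 1 (a, b))))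
        * Complex.I_mul_I
    have hu := hu_sym a b
    simp only [hF]
    rw [hS, hu]
    simp only [map_add, _root_.map_mul, Complex.conj_I, Complex.conj_conj]
    ring
  simp only [dx]
  show deriv (fun x => F (x, t)) ξ = starRingEnd ℂ (deriv (fun x => F (x, -t)) (-ξ))
  have h1 : (fun x : ℝ => F (x, t))
      = fun x => -starRingEnd ℂ (F (-x, -t)) := by
    funext x
    exact key x t
  have h2 : deriv (fun x : ℝ => F (-x, -t)) ξ = -deriv (fun y : ℝ => F (y, -t)) (-ξ) :=
    deriv_comp_neg (fun y : ℝ => F (y, -t)) ξ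
  rw [h1, deriv.fun_neg, deriv_conj_aux, h2, map_neg, neg_neg]
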